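/- The function u₁(x) = Σ_{even n ≥ 0} X̃^(n)(x)/n! is twice differentiable on (0,a) and satisfies the one-dimensional stationary Schrödinger equation −u₁''(x) + q(x) u₁(x) = 0 for all x ∈ (0,a). -/

import Mathlib

open MeasureTheory Set Filter

/-- The sequence X̃^(n): X̃^(0) ≡ 1; for n ≥ 1, X̃^(n)(x) = n ∫₀ˣ X̃^(n-1)(ξ) dξ
if n is even, and X̃^(n)(x) = n ∫₀ˣ X̃^(n-1)(ξ) q(ξ) dξ if n is odd. -/
noncomputable def Xtilde (q : ℝ → ℂ) : ℕ → ℝ → ℂ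
  | 0 => fun _ => 1
  | n + 1 => fun x => ((n + 1 : ℕ) : ℂ) *
      ∫ ξ in (0:ℝ)..x, Xtilde q n ξ * (if Even (n + 1) then 1 else q ξ)

/-- The sequence X^(n): X^(0) ≡ 1; for n ≥ 1, X^(n)(x) = n ∫₀ˣ X^(n-1)(ξ) q(ξ) dξ
if n is even, and X^(n)(x) = n ∫₀ˣ X^(n-1)(ξ) dξ if n is odd. -/
noncomputable def Xup (q : ℝ → ℂ) : ℕ → ℝ → ℂ
  | 0 => fun _ => 1
  | n + 1 => fun x => ((n + 1 : ℕ) : ℂ) *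
      ∫ ξ in (0:ℝ)..x, Xup q n ξ * (if Even (n + 1) then q ξ else 1)

/-- u₁(x) = Σ_{even n ≥ 0} X̃^(n)(x)/n!, written as a sum over even indices n = 2k. -/
noncomputable def u₁ (q : ℝ → ℂ) (x : ℝ) : ℂ :=
  ∑' k : ℕ, Xtilde q (2 * k) x / (Nat.factorial (2 * k) : ℂ)

/-- u₂(x) = Σ_{odd n ≥ 1} X^(n)(x)/n!, written as a sum over odd indices n = 2k+1. -/
noncomputable def u₂ (q : ℝ → ℂ) (x : ℝ) : ℂ :=
  ∑' k : ℕ, Xup q (2 * k + 1) x / (Nat.factorial (2 * k + 1) : ℂ)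

/-- The integrand appearing in the recursive definition of `Xtilde`. -/
noncomputable def Xw (q : ℝ → ℂ) (n : ℕ) : ℝ → ℂ :=
  fun ξ => Xtilde q n ξ * (if Even (n + 1) then 1 else q ξ)

lemma Xtilde_succ (q : ℝ → ℂ) (n : ℕ) :
    Xtilde q (n + 1) = fun x => ((n + 1 : ℕ) : ℂ) * ∫ ξ in (0:ℝ)..x, Xw q n ξ := rfl

/-- Continuity and bound for `Xtilde`. -/
lemma xt_cont_bound (a : ℝ) (ha0 : 0 ≤ a) (q : ℝ → ℂ) (hq : ContinuousOn q (Icc 0 a))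
    (C : ℝ) (hC1 : 1 ≤ C) (hC : ∀ x ∈ Icc 0 a, ‖q x‖ ≤ C) (n : ℕ) :
    ContinuousOn (Xtilde q n) (Icc 0 a) ∧
      ∀ x ∈ Icc 0 a, ‖Xtilde q n x‖ ≤ (C * x) ^ n := by
  have hC0 : 0 ≤ C := le_trans zero_le_one hC1
  induction n with
  | zero =>
    refine ⟨continuousOn_const, fun x hx => by simp [Xtilde]⟩
  | succ n ih =>
    obtain ⟨hcont, hbnd⟩ := ih
    have hwc : ContinuousOn (Xw q n) (Icc 0 a) := by
      unfold Xw
      by_cases h : Even (n + 1) <;> simp only [h, if_true, if_false]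
      · exact hcont.mul continuousOn_const
      · exact hcont.mul hq
    have hwb : ∀ ξ ∈ Icc 0 a, ‖Xw q n ξ‖ ≤ C ^ (n + 1) * ξ ^ n := by
      intro ξ hξ
      have h1 : ‖(if Even (n + 1) then (1:ℂ) else q ξ)‖ ≤ C := by
        by_cases h : Even (n + 1) <;> simp only [h, if_true, if_false]
        · simpa using hC1
        · exact hC ξ hξ
      have h2 := hbnd ξ hξ
      calc ‖Xw q n ξ‖ = ‖Xtilde q n ξ‖ * ‖(if Even (n + 1) then (1:ℂ) else q ξ)‖ := by
            rw [Xw, norm_mul]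
        _ ≤ (C * ξ) ^ n * C := by
            apply mul_le_mul h2 h1 (norm_nonneg _)
            exact pow_nonneg (mul_nonneg hC0 hξ.1) n
        _ = C ^ (n + 1) * ξ ^ n := by rw [mul_pow]; ring
    constructor
    · rw [Xtilde_succ]
      apply continuousOn_const.mul
      have hint : IntegrableOn (Xw q n) (uIcc 0 a) volume := by
        rw [uIcc_of_le ha0]; exact hwc.integrableOn_Icc
      have := intervalIntegral.continuousOn_primitive_interval hint
      rwa [uIcc_of_le ha0] at this
    · intro x hx
      have hx0 : (0:ℝ) ≤ x := hx.1
      have hsub : Icc (0:ℝ) x ⊆ Icc 0 a := Icc_subset_Icc le_rfl hx.2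
      have hwint : IntervalIntegrable (Xw q n) volume 0 x :=
        (hwc.mono (by rw [uIcc_of_le hx0]; exact hsub)).intervalIntegrable
      have h1 : ‖∫ ξ in (0:ℝ)..x, Xw q n ξ‖ ≤ ∫ ξ in (0:ℝ)..x, ‖Xw q n ξ‖ :=
        intervalIntegral.norm_integral_le_integral_norm hx0
      have h2 : (∫ ξ in (0:ℝ)..x, ‖Xw q n ξ‖) ≤ ∫ ξ in (0:ℝ)..x, C ^ (n + 1) * ξ ^ n := by
        apply intervalIntegral.integral_mono_on hx0 hwint.norm
        · exact (continuous_const.mul (continuous_pow n)).intervalIntegrable _ _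
        · intro ξ hξ; exact hwb ξ (hsub hξ)
      have h3 : (∫ ξ in (0:ℝ)..x, C ^ (n + 1) * ξ ^ n) =
          C ^ (n + 1) * (x ^ (n + 1) / (n + 1)) := by
        rw [intervalIntegral.integral_const_mul, integral_pow]
        simp
      have hnorm : ‖Xtilde q (n + 1) x‖ =
          ((n : ℝ) + 1) * ‖∫ ξ in (0:ℝ)..x, Xw q n ξ‖ := by
        rw [Xtilde_succ, norm_mul, Complex.norm_natCast]
        push_cast
        ring
      rw [hnorm]
      have hn1 : (0:ℝ) < (n : ℝ) + 1 := by positivity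
      calc ((n : ℝ) + 1) * ‖∫ ξ in (0:ℝ)..x, Xw q n ξ‖
          ≤ ((n : ℝ) + 1) * (C ^ (n + 1) * (x ^ (n + 1) / ((n : ℝ) + 1))) := by
            apply mul_le_mul_of_nonneg_left _ (le_of_lt hn1)
            rw [← h3]; exact le_trans h1 h2
        _ = (C * x) ^ (n + 1) := by
            rw [mul_pow]; field_simp

/-- Derivative of `Xtilde (n+1)` at interior points. -/
lemma xt_deriv (a : ℝ) (q : ℝ → ℂ) (hq : ContinuousOn q (Icc 0 a))
    (C : ℝ) (hC1 : 1 ≤ C) (hC : ∀ x ∈ Icc 0 a, ‖q x‖ ≤ C) (n : ℕ)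
    (x : ℝ) (hx : x ∈ Ioo 0 a) :
    HasDerivAt (Xtilde q (n + 1)) (((n + 1 : ℕ) : ℂ) * Xw q n x) x := by
  have ha0 : (0:ℝ) ≤ a := le_of_lt (lt_trans hx.1 hx.2)
  have hcont := (xt_cont_bound a ha0 q hq C hC1 hC n).1
  have hwc : ContinuousOn (Xw q n) (Icc 0 a) := by
    unfold Xw
    by_cases h : Even (n + 1) <;> simp only [h, if_true, if_false]
    · exact hcont.mul continuousOn_const
    · exact hcont.mul hq
  have hx0 : (0:ℝ) ≤ x := le_of_lt hx.1
  have hwint : IntervalIntegrable (Xw q n) volume 0 x :=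
    (hwc.mono (by rw [uIcc_of_le hx0]; exact Icc_subset_Icc le_rfl (le_of_lt hx.2))).intervalIntegrable
  have hmeas : StronglyMeasurableAtFilter (Xw q n) (nhds x) :=
    ⟨Ioo 0 a, Ioo_mem_nhds hx.1 hx.2,
      (hwc.mono Ioo_subset_Icc_self).aestronglyMeasurable measurableSet_Ioo⟩
  have hcx : ContinuousAt (Xw q n) x :=
    hwc.continuousAt (Icc_mem_nhds hx.1 hx.2)
  have h := intervalIntegral.integral_hasDerivAt_right hwint hmeas hcx
  rw [Xtilde_succ]
  exact h.const_mul _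

/-- u₁(x) = Σ_{even n ≥ 0} X̃^(n)(x)/n! is twice differentiable on (0,a)
and satisfies −u₁''(x) + q(x) u₁(x) = 0 for all x ∈ (0,a). -/
theorem stmt_6 (a : ℝ) (ha : 0 < a) (q : ℝ → ℂ) (hq : ContinuousOn q (Set.Icc 0 a)) :
    (∀ x ∈ Set.Ioo 0 a, DifferentiableAt ℝ (u₁ q) x ∧ DifferentiableAt ℝ (deriv (u₁ q)) x) ∧
    ∀ x ∈ Set.Ioo 0 a, -(deriv (deriv (u₁ q)) x) + q x * u₁ q x = 0 := by
  obtain ⟨M, hM⟩ := IsCompact.exists_bound_of_continuousOn isCompact_Icc hq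
  set C : ℝ := max M 1 with hCdef
  have hC1 : (1:ℝ) ≤ C := le_max_right _ _
  have hC0 : (0:ℝ) ≤ C := le_trans zero_le_one hC1
  have hC : ∀ x ∈ Icc 0 a, ‖q x‖ ≤ C := fun x hx => le_trans (hM x hx) (le_max_left _ _)
  have ha0 : (0:ℝ) ≤ a := le_of_lt ha
  -- uniform bound on Icc 0 a
  have hxb : ∀ n : ℕ, ∀ x ∈ Icc (0:ℝ) a, ‖Xtilde q n x‖ ≤ (C * a) ^ n := by
    intro n x hx
    refine le_trans ((xt_cont_bound a ha0 q hq C hC1 hC n).2 x hx) ?_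
    exact pow_le_pow_left₀ (mul_nonneg hC0 hx.1)
      (mul_le_mul_of_nonneg_left hx.2 hC0) n
  set F : ℕ → ℝ := fun n => (C * a) ^ n / n.factorial with hFdef
  have hF : Summable F := Real.summable_pow_div_factorial (C * a)
  have hinj2 : Function.Injective (fun k : ℕ => 2 * k) := fun m n h => by
    dsimp at h; omega
  have hinj21 : Function.Injective (fun k : ℕ => 2 * k + 1) := fun m n h => by
    dsimp at h; omega
  have hFe : Summable (fun k : ℕ => F (2 * k)) := hF.comp_injective hinj2
  have hFo : Summable (fun k : ℕ => F (2 * k + 1)) := hF.comp_injective hinj21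
  have hIoo_sub : Ioo (0:ℝ) a ⊆ Icc 0 a := Ioo_subset_Icc_self
  -- term bounds
  have hfb : ∀ (k : ℕ) (x : ℝ), x ∈ Icc (0:ℝ) a →
      ‖Xtilde q (2 * k) x / ((2 * k).factorial : ℂ)‖ ≤ F (2 * k) := by
    intro k x hx
    rw [norm_div, Complex.norm_natCast]
    simp only [hFdef]
    gcongr
    exact hxb (2 * k) x hx
  have hob : ∀ (k : ℕ) (x : ℝ), x ∈ Icc (0:ℝ) a →
      ‖Xtilde q (2 * k + 1) x / ((2 * k + 1).factorial : ℂ)‖ ≤ F (2 * k + 1) := by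
    intro k x hx
    rw [norm_div, Complex.norm_natCast]
    simp only [hFdef]
    gcongr
    exact hxb (2 * k + 1) x hx
  -- the series of term derivatives for u₁
  set g : ℕ → ℝ → ℂ := fun k => Nat.casesOn k (fun _ => (0:ℂ))
    (fun k x => Xtilde q (2 * k + 1) x / ((2 * k + 1).factorial : ℂ)) with hgdef
  have hfderiv : ∀ (k : ℕ) (x : ℝ), x ∈ Ioo 0 a →
      HasDerivAt (fun y => Xtilde q (2 * k) y / ((2 * k).factorial : ℂ)) (g k x) x := by
    intro k x hx
    cases k with
    | zero =>
      have heq : (fun y => Xtilde q (2 * 0) y / (((2 * 0).factorial : ℕ) : ℂ)) =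
          fun _ => (1:ℂ) := by
        funext y; simp [Xtilde]
      rw [heq]
      exact hasDerivAt_const x 1
    | succ k =>
      have h := xt_deriv a q hq C hC1 hC (2 * k + 1) x hx
      have hw : Xw q (2 * k + 1) x = Xtilde q (2 * k + 1) x := by
        have he : Even (2 * k + 1 + 1) := ⟨k + 1, by ring⟩
        simp [Xw, he]
      rw [hw] at h
      have h2 := h.div_const (((2 * (k + 1)).factorial : ℕ) : ℂ)
      have hfac : (2 * (k + 1)).factorial = (2 * k + 1 + 1) * (2 * k + 1).factorial := by
        have h21 : 2 * (k + 1) = 2 * k + 1 + 1 := by ring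
        rw [h21, Nat.factorial_succ]
      have hne : ((2 * k + 1 + 1 : ℕ) : ℂ) ≠ 0 := Nat.cast_ne_zero.mpr (by omega)
      have hval : ((2 * k + 1 + 1 : ℕ) : ℂ) * Xtilde q (2 * k + 1) x /
          (((2 * (k + 1)).factorial : ℕ) : ℂ) =
          Xtilde q (2 * k + 1) x / (((2 * k + 1).factorial : ℕ) : ℂ) := by
        rw [hfac, Nat.cast_mul]
        exact mul_div_mul_left _ _ hne
      rw [hval] at h2
      exact h2
  -- bound on the derivative series
  set ub : ℕ → ℝ := fun k => Nat.casesOn k 0 (fun k => F (2 * k + 1)) with hubdef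
  have hub : Summable ub := by
    rw [← summable_nat_add_iff 1]
    exact hFo
  have hgu : ∀ (k : ℕ) (x : ℝ), x ∈ Ioo 0 a → ‖g k x‖ ≤ ub k := by
    intro k x hx
    cases k with
    | zero => simp [hgdef, hubdef]
    | succ k => exact hob k x (hIoo_sub hx)
  have hx₀ : a / 2 ∈ Ioo (0:ℝ) a := ⟨by linarith, by linarith⟩
  have hf0 : Summable (fun k => Xtilde q (2 * k) (a / 2) / ((2 * k).factorial : ℂ)) :=
    Summable.of_norm_bounded hFe (fun k => hfb k (a / 2) (hIoo_sub hx₀))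
  -- first derivative
  have H1 : ∀ x ∈ Ioo (0:ℝ) a, HasDerivAt (u₁ q) (∑' k, g k x) x := by
    intro x hx
    exact hasDerivAt_tsum_of_isPreconnected hub isOpen_Ioo isPreconnected_Ioo
      (fun k y hy => hfderiv k y hy) (fun k y hy => hgu k y hy) hx₀ hf0 hx
  set v : ℝ → ℂ := fun x => ∑' k, Xtilde q (2 * k + 1) x / ((2 * k + 1).factorial : ℂ)
    with hvdef
  have hgsum : ∀ x ∈ Ioo (0:ℝ) a, (∑' k, g k x) = v x := by
    intro x hx
    have hs : Summable (fun k => g k x) :=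
      Summable.of_norm_bounded hub (fun k => hgu k x hx)
    rw [Summable.tsum_eq_zero_add hs]
    simp [hgdef, hvdef]
  have H1' : ∀ x ∈ Ioo (0:ℝ) a, deriv (u₁ q) x = v x := by
    intro x hx
    rw [(H1 x hx).deriv, hgsum x hx]
  -- second differentiation
  have hvderiv : ∀ (k : ℕ) (x : ℝ), x ∈ Ioo 0 a →
      HasDerivAt (fun y => Xtilde q (2 * k + 1) y / ((2 * k + 1).factorial : ℂ))
        (Xtilde q (2 * k) x * q x / ((2 * k).factorial : ℂ)) x := by
    intro k x hx
    have h := xt_deriv a q hq C hC1 hC (2 * k) x hx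
    have hw : Xw q (2 * k) x = Xtilde q (2 * k) x * q x := by
      have ho : ¬ Even (2 * k + 1) := by simp [Nat.even_add_one]
      simp [Xw, ho]
    rw [hw] at h
    have h2 := h.div_const (((2 * k + 1).factorial : ℕ) : ℂ)
    have hne : ((2 * k + 1 : ℕ) : ℂ) ≠ 0 := Nat.cast_ne_zero.mpr (by omega)
    have hval : ((2 * k + 1 : ℕ) : ℂ) * (Xtilde q (2 * k) x * q x) /
        (((2 * k + 1).factorial : ℕ) : ℂ) =
        Xtilde q (2 * k) x * q x / (((2 * k).factorial : ℕ) : ℂ) := by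
      rw [Nat.factorial_succ, Nat.cast_mul]
      exact mul_div_mul_left _ _ hne
    rw [hval] at h2
    exact h2
  set u2 : ℕ → ℝ := fun k => C * F (2 * k) with hu2def
  have hu2 : Summable u2 := hFe.mul_left C
  have hvb : ∀ (k : ℕ) (x : ℝ), x ∈ Ioo 0 a →
      ‖Xtilde q (2 * k) x * q x / ((2 * k).factorial : ℂ)‖ ≤ u2 k := by
    intro k x hx
    have hxI := hIoo_sub hx
    have h1 : ‖Xtilde q (2 * k) x‖ * ‖q x‖ ≤ (C * a) ^ (2 * k) * C :=
      mul_le_mul (hxb (2 * k) x hxI) (hC x hxI) (norm_nonneg _) (by positivity)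
    calc ‖Xtilde q (2 * k) x * q x / ((2 * k).factorial : ℂ)‖
        = ‖Xtilde q (2 * k) x‖ * ‖q x‖ / (((2 * k).factorial : ℕ) : ℝ) := by
          rw [norm_div, norm_mul, Complex.norm_natCast]
      _ ≤ ((C * a) ^ (2 * k) * C) / (((2 * k).factorial : ℕ) : ℝ) := by
          gcongr
      _ = u2 k := by
          simp only [hu2def, hFdef]
          all_goals ring
  have hv0 : Summable (fun k => Xtilde q (2 * k + 1) (a / 2) / ((2 * k + 1).factorial : ℂ)) :=
    Summable.of_norm_bounded hFo (fun k => hob k (a / 2) (hIoo_sub hx₀))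
  have H2 : ∀ x ∈ Ioo (0:ℝ) a, HasDerivAt v (q x * u₁ q x) x := by
    intro x hx
    have h := hasDerivAt_tsum_of_isPreconnected hu2 isOpen_Ioo isPreconnected_Ioo
      (fun k y hy => hvderiv k y hy) (fun k y hy => hvb k y hy) hx₀ hv0 hx
    have heq : (∑' k, Xtilde q (2 * k) x * q x / ((2 * k).factorial : ℂ)) =
        q x * u₁ q x := by
      rw [u₁, ← tsum_mul_left]
      apply tsum_congr
      intro k
      ring
    rw [heq] at h
    exact h
  -- transfer derivative of v to deriv (u₁ q)
  have Hd : ∀ x ∈ Ioo (0:ℝ) a, HasDerivAt (deriv (u₁ q)) (q x * u₁ q x) x := by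
    intro x hx
    apply (H2 x hx).congr_of_eventuallyEq
    exact eventuallyEq_of_mem (isOpen_Ioo.mem_nhds hx) (fun y hy => H1' y hy)
  constructor
  · intro x hx
    exact ⟨(H1 x hx).differentiableAt, (Hd x hx).differentiableAt⟩
  · intro x hx
    rw [(Hd x hx).deriv]
    ring
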